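/- There exists a ring homomorphism D' : R' → R' satisfying D'(t) = t⁻¹, D'(s) = s⁻¹, and D'(x) = t⁻²s⁻¹·x; moreover D' ∘ D' is the identity map of R', so D' is a ring automorphism of R' of order two. -/

import Mathlib

/-!
The ring `R' = ℤ[s^{±1}, t^{±1}, x] / (x³ = 2t²sx)` is modeled as a quotient of the
polynomial ring `ℤ[s, s', t, t', x]` (variables indexed by `Fin 5`: `0 ↦ s`, `1 ↦ s⁻¹`,
`2 ↦ t`, `3 ↦ t⁻¹`, `4 ↦ x`) by the ideal generated by `s·s' − 1`, `t·t' − 1` (making `s` and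
`t` invertible) and the defining relation `x³ − 2t²sx`.
-/

open MvPolynomial

noncomputable section

def boRel' : Ideal (MvPolynomial (Fin 5) ℤ) :=
  Ideal.span
    { X 0 * X 1 - 1,
      X 2 * X 3 - 1,
      X 4 ^ 3 - 2 * X 2 ^ 2 * X 0 * X 4 }

def R' : Type := MvPolynomial (Fin 5) ℤ ⧸ boRel'

instance : CommRing R' := inferInstanceAs (CommRing (MvPolynomial (Fin 5) ℤ ⧸ boRel'))

/-- the element `s` of `R'` -/
def s : R' := Ideal.Quotient.mk boRel' (X 0)
/-- the element `s⁻¹` of `R'` -/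
def si : R' := Ideal.Quotient.mk boRel' (X 1)
/-- the element `t` of `R'` -/
def t : R' := Ideal.Quotient.mk boRel' (X 2)
/-- the element `t⁻¹` of `R'` -/
def ti : R' := Ideal.Quotient.mk boRel' (X 3)
/-- the element `x` of `R'` -/
def x : R' := Ideal.Quotient.mk boRel' (X 4)

lemma hs' : s * si = 1 := by
  have h : (Ideal.Quotient.mk boRel') (X 0 * X 1 - 1) = 0 :=
    Ideal.Quotient.eq_zero_iff_mem.mpr (Ideal.subset_span (by simp))
  have h2 : s * si - 1 = 0 := by simp only [map_sub, map_mul, map_one] at h; exact h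
  linear_combination h2

lemma ht' : t * ti = 1 := by
  have h : (Ideal.Quotient.mk boRel') (X 2 * X 3 - 1) = 0 :=
    Ideal.Quotient.eq_zero_iff_mem.mpr (Ideal.subset_span (by simp))
  have h2 : t * ti - 1 = 0 := by simp only [map_sub, map_mul, map_one] at h; exact h
  linear_combination h2

lemma hx' : x ^ 3 = 2 * t ^ 2 * s * x := by
  have h : (Ideal.Quotient.mk boRel') (X 4 ^ 3 - 2 * X 2 ^ 2 * X 0 * X 4) = 0 :=
    Ideal.Quotient.eq_zero_iff_mem.mpr (Ideal.subset_span (by simp))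
  have h2 : x ^ 3 - 2 * t ^ 2 * s * x = 0 := by
    simp only [map_sub, map_mul, map_pow, map_ofNat] at h; exact h
  linear_combination h2

/-- the duality map on the polynomial ring -/
def φ : MvPolynomial (Fin 5) ℤ →+* R' :=
  (eval₂Hom (Int.castRingHom R') ![si, s, ti, t, ti ^ 2 * si * x])

lemma φ_ker : ∀ p ∈ boRel', φ p = 0 := by
  intro p hp
  have hle : boRel' ≤ RingHom.ker φ := by
    rw [boRel', Ideal.span_le]
    rintro q hq
    rw [SetLike.mem_coe, RingHom.mem_ker]
    simp only [Set.mem_insert_iff, Set.mem_singleton_iff] at hq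
    rcases hq with rfl | rfl | rfl
    · simp only [φ, map_sub, map_mul, map_one, eval₂Hom_X']
      simp only [Matrix.cons_val_zero, Matrix.cons_val_one, Matrix.head_cons]
      linear_combination hs'
    · simp only [φ, map_sub, map_mul, map_one, eval₂Hom_X']
      have e2 : (![si, s, ti, t, ti ^ 2 * si * x] : Fin 5 → R') 2 = ti := rfl
      have e3 : (![si, s, ti, t, ti ^ 2 * si * x] : Fin 5 → R') 3 = t := rfl
      rw [e2, e3]
      linear_combination ht'
    · simp only [φ, map_sub, map_mul, map_pow, map_ofNat, eval₂Hom_X']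
      have e0 : (![si, s, ti, t, ti ^ 2 * si * x] : Fin 5 → R') 0 = si := rfl
      have e2 : (![si, s, ti, t, ti ^ 2 * si * x] : Fin 5 → R') 2 = ti := rfl
      have e4 : (![si, s, ti, t, ti ^ 2 * si * x] : Fin 5 → R') 4 = ti ^ 2 * si * x := rfl
      rw [e0, e2, e4]
      linear_combination (ti ^ 6 * si ^ 3) * hx' + (2 * ti ^ 6 * si ^ 2 * t ^ 2 * x) * hs' +
        (2 * ti ^ 4 * si ^ 2 * x * (t * ti + 1)) * ht'
  exact hle hp

/-- the duality ring homomorphism -/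
def D' : R' →+* R' := Ideal.Quotient.lift boRel' φ φ_ker

lemma D'_mk (p : MvPolynomial (Fin 5) ℤ) : D' (Ideal.Quotient.mk boRel' p) = φ p :=
  Ideal.Quotient.lift_mk boRel' φ φ_ker

lemma D'_s : D' s = si := by
  rw [s, D'_mk]; simp [φ]

lemma D'_si : D' si = s := by
  rw [si, D'_mk]; simp [φ]

lemma D'_t : D' t = ti := by
  rw [t, D'_mk]; simp [φ]

lemma D'_ti : D' ti = t := by
  rw [ti, D'_mk]; simp [φ]

lemma D'_x : D' x = ti ^ 2 * si * x := by
  rw [x, D'_mk]; simp [φ, x]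

/-- There is a ring homomorphism `D' : R' → R'` with `D'(t) = t⁻¹`, `D'(s) = s⁻¹`,
`D'(x) = t⁻²s⁻¹·x`, and `D' ∘ D' = id`, so `D'` is a ring automorphism of `R'` of order two. -/
theorem exists_duality' :
    ∃ D : R' →+* R',
      D t = ti ∧ D s = si ∧ D x = ti ^ 2 * si * x ∧
      D.comp D = RingHom.id R' := by
  refine ⟨D', D'_t, D'_s, D'_x, ?_⟩
  apply Ideal.Quotient.ringHom_ext
  apply MvPolynomial.ringHom_ext
  · intro r
    exact RingHom.congr_fun
      (RingHom.ext_int (((D'.comp D').comp (Ideal.Quotient.mk boRel')).comp (C : ℤ →+* _))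
        (((RingHom.id R').comp (Ideal.Quotient.mk boRel')).comp (C : ℤ →+* _))) r
  · intro i
    fin_cases i <;>
      simp only [RingHom.comp_apply, RingHom.id_apply]
    · show D' (D' s) = s
      rw [D'_s, D'_si]
    · show D' (D' si) = si
      rw [D'_si, D'_s]
    · show D' (D' t) = t
      rw [D'_t, D'_ti]
    · show D' (D' ti) = ti
      rw [D'_ti, D'_t]
    · show D' (D' x) = x
      rw [D'_x, map_mul, map_mul, map_pow, D'_ti, D'_si, D'_x]
      linear_combination (x * ti ^ 2 * t ^ 2) * hs' + (x * (t * ti + 1)) * ht'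

end
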